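/- Assume for every x ∈ 𝒳 there exists x̂ ∈ 𝒳̂ with d(x,x̂) = 0. Let K, k, m be positive integers, n = m(K+k), and fix x ∈ 𝒳^n with K-type P̂^K_x. Fix δ > 0 and set D_max = max_{x,x̂} d(x,x̂), δ₂ = k(D_max − D)/K and D' = D − δ₂ − δ/K, assuming D' > 0. Let P* be any conditional distribution from 𝒳^K to 𝒳̂^K achieving R_K(D', P̂^K_x) and let Q^K(ŝ) = Σ_{s∈𝒳^K} P̂^K_x(s) P*(ŝ|s). Then for every ε > 0 there exists a sequence ε_m → 0 (uniform in x) such that Σ over (ŝ₁,…,ŝ_m) ∈ (𝒳̂^K)^m with Σ_{i=1}^m d(x̲_i, ŝ_i) ≤ mK(D−δ₂) of Π_{i=1}^m Q^K(ŝ_i) ≥ (1 − 2ε_m) · 2^{−m [R_K(D', P̂^K_x) + ε]}. -/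

import Mathlib

open scoped BigOperators Classical
open Filter

section Defs

/-- A probability mass function on a finite alphabet. -/
def IsPMF {α : Type*} [Fintype α] (p : α → ℝ) : Prop :=
  (∀ a, 0 ≤ p a) ∧ ∑ a, p a = 1

/-- A conditional probability mass function (a channel / test channel). -/
def IsCondPMF {α β : Type*} [Fintype α] [Fintype β] (W : α → β → ℝ) : Prop :=
  ∀ a, IsPMF (W a)

/-- Base-2 Kullback–Leibler divergence `D(Q‖P)`. -/
noncomputable def klDiv2 {α : Type*} [Fintype α] (Q P : α → ℝ) : ℝ :=
  ∑ a, Q a * Real.logb 2 (Q a / P a)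

/-- Base-2 mutual information `I(X;X̂)` of the joint law `Q(a) W(b|a)`. -/
noncomputable def mutInf2 {α β : Type*} [Fintype α] [Fintype β]
    (Q : α → ℝ) (W : α → β → ℝ) : ℝ :=
  ∑ a, ∑ b, Q a * W a b * Real.logb 2 (W a b / (∑ a', Q a' * W a' b))

/-- The rate–distortion function `R(D,Q)` (base 2). -/
noncomputable def RD {X Xh : Type*} [Fintype X] [Fintype Xh]
    (d : X → Xh → ℝ) (D : ℝ) (Q : X → ℝ) : ℝ :=
  sInf { r | ∃ V : X → Xh → ℝ, IsCondPMF V ∧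
    (∑ x, ∑ xh, Q x * V x xh * d x xh) ≤ D ∧ r = mutInf2 Q V }

/-- Empirical distribution of a sequence. -/
noncomputable def empDist {X : Type*} [Fintype X] {n : ℕ} (x : Fin n → X) : X → ℝ :=
  fun a => ((Finset.univ.filter (fun i => x i = a)).card : ℝ) / n

/-- Base-2 empirical entropy of a sequence. -/
noncomputable def empEnt {X : Type*} [Fintype X] {n : ℕ} (x : Fin n → X) : ℝ :=
  - ∑ a, empDist x a * Real.logb 2 (empDist x a)

/-- Additive (per-block) distortion between sequences. -/
noncomputable def dSeq {X Xh : Type*} {n : ℕ} (d : X → Xh → ℝ)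
    (x : Fin n → X) (xh : Fin n → Xh) : ℝ :=
  ∑ i, d (x i) (xh i)

/-- The universal guessing distribution `P̃(x̂) ∝ 2^{-n Ĥ_x̂}` on `𝒳̂ⁿ`. -/
noncomputable def univDist {Xh : Type*} [Fintype Xh] {n : ℕ} (xh : Fin n → Xh) : ℝ :=
  (2 : ℝ) ^ (-(n : ℝ) * empEnt xh) / ∑ z : Fin n → Xh, (2 : ℝ) ^ (-(n : ℝ) * empEnt z)

/-- Probability of the distortion ball `S(x)` under the universal distribution. -/
noncomputable def univDistBall {X Xh : Type*} [Fintype Xh] {n : ℕ}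
    (d : X → Xh → ℝ) (D : ℝ) (x : Fin n → X) : ℝ :=
  ∑ xh ∈ Finset.univ.filter (fun xh : Fin n → Xh => dSeq d x xh ≤ (n : ℝ) * D), univDist xh

end Defs

/-- The `i`-th length-`K` block of a sequence of length `m(K+k)` parsed into `m` blocks of
length `K` separated by gaps of length `k`. -/
def blockOf {X : Type*} {K k m : ℕ} (x : Fin (m * (K + k)) → X) (i : Fin m) :
    Fin K → X := fun j =>
  x ⟨i.1 * (K + k) + j.1, by
    have hi : i.1 + 1 ≤ m := i.2
    calc i.1 * (K + k) + j.1 < i.1 * (K + k) + (K + k) := by omega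
      _ = (i.1 + 1) * (K + k) := by ring
      _ ≤ m * (K + k) := Nat.mul_le_mul_right _ hi⟩

/-- The `K`-type of `x`: the empirical distribution on `𝒳^K` of its `m` blocks. -/
noncomputable def kType {X : Type*} [Fintype X] {K k m : ℕ}
    (x : Fin (m * (K + k)) → X) : (Fin K → X) → ℝ :=
  empDist (fun i : Fin m => blockOf x i)

/- ### Auxiliary lemmas -/

section Aux
variable {B : Type*} [Fintype B] {m : ℕ}

lemma sum_prod_fn (w : Fin m → B → ℝ) :
    ∑ sh : Fin m → B, ∏ i, w i (sh i) = ∏ i, ∑ b, w i b :=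
  (Fintype.prod_sum w).symm

lemma expect_pair (p : Fin m → B → ℝ) (hp1 : ∀ i, ∑ b, p i b = 1)
    (i j : Fin m) (u v : B → ℝ) :
    ∑ sh : Fin m → B, (∏ k, p k (sh k)) * (u (sh i) * v (sh j)) =
      if i = j then ∑ b, p i b * (u b * v b)
      else (∑ b, p i b * u b) * (∑ b, p j b * v b) := by
  have hstep : ∀ sh : Fin m → B,
      (∏ k, p k (sh k)) * (u (sh i) * v (sh j)) =
        ∏ k, (p k (sh k) * ((if k = i then u (sh k) else 1) * (if k = j then v (sh k) else 1))) := by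
    intro sh
    rw [Finset.prod_mul_distrib, Finset.prod_mul_distrib,
      Finset.prod_ite_eq' Finset.univ i (fun k => u (sh k)),
      Finset.prod_ite_eq' Finset.univ j (fun k => v (sh k))]
    simp
  rw [Finset.sum_congr rfl (fun sh _ => hstep sh),
    sum_prod_fn (fun k b => p k b * ((if k = i then u b else 1) * (if k = j then v b else 1)))]
  by_cases hij : i = j
  · subst hij
    simp only [if_pos rfl]
    have hS : ∀ k : Fin m, (∑ b, p k b * ((if k = i then u b else 1) * (if k = i then v b else 1)))
        = if k = i then (∑ b, p i b * (u b * v b)) else 1 := by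
      intro k
      by_cases hk : k = i
      · subst hk; simp
      · simp [hk, hp1 k]
    rw [Finset.prod_congr rfl (fun k _ => hS k),
      Finset.prod_ite_eq' Finset.univ i (fun _ => ∑ b, p i b * (u b * v b))]
    simp
  · simp only [if_neg hij]
    have hS : ∀ k : Fin m, (∑ b, p k b * ((if k = i then u b else 1) * (if k = j then v b else 1)))
        = if k = i then (∑ b, p i b * u b) else if k = j then (∑ b, p j b * v b) else 1 := by
      intro k
      by_cases hk : k = i
      · subst hk; simp [hij]
      · by_cases hk' : k = j
        · subst hk'; simp [hk]
        · simp [hk, hk', hp1 k]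
    rw [Finset.prod_congr rfl (fun k _ => hS k)]
    rw [← Finset.mul_prod_erase Finset.univ _ (Finset.mem_univ i)]
    have hji : j ∈ Finset.univ.erase i := by
      simp [Ne.symm hij]
    rw [← Finset.mul_prod_erase _ _ hji]
    have : ∀ k ∈ (Finset.univ.erase i).erase j,
        (if k = i then (∑ b, p i b * u b) else if k = j then (∑ b, p j b * v b) else 1) = 1 := by
      intro k hk
      have h1 : k ≠ j := (Finset.mem_erase.mp hk).1
      have h2 : k ≠ i := (Finset.mem_erase.mp (Finset.mem_erase.mp hk).2).1
      simp [h1, h2]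
    rw [Finset.prod_congr rfl this]
    simp [hij, Ne.symm hij]

lemma prod_mass_one (p : Fin m → B → ℝ) (hp1 : ∀ i, ∑ b, p i b = 1) :
    ∑ sh : Fin m → B, ∏ i, p i (sh i) = 1 := by
  rw [sum_prod_fn p]
  simp [hp1]

lemma chebyshev_tail (p : Fin m → B → ℝ)
    (hp0 : ∀ i b, 0 ≤ p i b) (hp1 : ∀ i, ∑ b, p i b = 1)
    (h : Fin m → B → ℝ) (t : ℝ) (ht : 0 < t) :
    ∑ sh ∈ Finset.univ.filter (fun sh : Fin m → B =>
        (∑ i, ∑ b, p i b * h i b) + t < ∑ i, h i (sh i)),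
      ∏ i, p i (sh i) ≤
    (∑ i, ∑ b, p i b * (h i b - ∑ c, p i c * h i c)^2) / t^2 := by
  set c : Fin m → B → ℝ := fun i b => h i b - ∑ c', p i c' * h i c' with hc
  have hcmean : ∀ i, ∑ b, p i b * c i b = 0 := by
    intro i
    have : ∀ b, p i b * c i b = p i b * h i b - p i b * (∑ c', p i c' * h i c') := by
      intro b; rw [hc]; ring
    rw [Finset.sum_congr rfl (fun b _ => this b), Finset.sum_sub_distrib,
      ← Finset.sum_mul, hp1 i, one_mul, sub_self]
  have hprodnn : ∀ sh : Fin m → B, 0 ≤ ∏ i, p i (sh i) := fun sh =>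
    Finset.prod_nonneg (fun i _ => hp0 i (sh i))
  have hmoment : ∑ sh : Fin m → B, (∏ i, p i (sh i)) * (∑ i, c i (sh i))^2
      = ∑ i, ∑ b, p i b * (c i b)^2 := by
    have expand : ∀ sh : Fin m → B,
        (∏ i, p i (sh i)) * (∑ i, c i (sh i))^2
          = ∑ i, ∑ j, (∏ k, p k (sh k)) * (c i (sh i) * c j (sh j)) := by
      intro sh
      rw [sq, Finset.sum_mul_sum]
      rw [Finset.mul_sum]
      refine Finset.sum_congr rfl (fun i _ => ?_)
      rw [Finset.mul_sum]
    rw [Finset.sum_congr rfl (fun sh _ => expand sh)]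
    rw [Finset.sum_comm]
    refine Finset.sum_congr rfl (fun i _ => ?_)
    rw [Finset.sum_comm]
    have : ∀ j, ∑ sh : Fin m → B, (∏ k, p k (sh k)) * (c i (sh i) * c j (sh j))
        = if i = j then ∑ b, p i b * (c i b)^2 else 0 := by
      intro j
      rw [expect_pair p hp1 i j (c i) (c j)]
      by_cases hij : i = j
      · subst hij; simp [sq]
      · simp [hij, hcmean i]
    rw [Finset.sum_congr rfl (fun j _ => this j), Finset.sum_ite_eq Finset.univ i
      (fun _ => ∑ b, p i b * (c i b)^2)]
    simp
  have key : ∀ sh ∈ Finset.univ.filter (fun sh : Fin m → B =>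
        (∑ i, ∑ b, p i b * h i b) + t < ∑ i, h i (sh i)),
      ∏ i, p i (sh i) ≤ (∏ i, p i (sh i)) * (∑ i, c i (sh i))^2 / t^2 := by
    intro sh hsh
    rw [Finset.mem_filter] at hsh
    have hS : t < ∑ i, c i (sh i) := by
      have : ∑ i, c i (sh i) = (∑ i, h i (sh i)) - ∑ i, ∑ b, p i b * h i b := by
        rw [hc, Finset.sum_sub_distrib]
      rw [this]; linarith [hsh.2]
    have h1 : t^2 < (∑ i, c i (sh i))^2 := by nlinarith
    have h2 : (1 : ℝ) ≤ (∑ i, c i (sh i))^2 / t^2 := by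
      rw [le_div_iff₀ (by positivity)]; linarith
    calc ∏ i, p i (sh i) = (∏ i, p i (sh i)) * 1 := by ring
      _ ≤ (∏ i, p i (sh i)) * ((∑ i, c i (sh i))^2 / t^2) :=
          mul_le_mul_of_nonneg_left h2 (hprodnn sh)
      _ = (∏ i, p i (sh i)) * (∑ i, c i (sh i))^2 / t^2 := by ring
  calc ∑ sh ∈ Finset.univ.filter (fun sh : Fin m → B =>
        (∑ i, ∑ b, p i b * h i b) + t < ∑ i, h i (sh i)), ∏ i, p i (sh i)
      ≤ ∑ sh ∈ Finset.univ.filter (fun sh : Fin m → B =>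
        (∑ i, ∑ b, p i b * h i b) + t < ∑ i, h i (sh i)),
          (∏ i, p i (sh i)) * (∑ i, c i (sh i))^2 / t^2 := Finset.sum_le_sum key
    _ ≤ ∑ sh : Fin m → B, (∏ i, p i (sh i)) * (∑ i, c i (sh i))^2 / t^2 := by
        refine Finset.sum_le_sum_of_subset_of_nonneg (Finset.filter_subset _ _) ?_
        intro sh _ _
        exact div_nonneg (mul_nonneg (hprodnn sh) (sq_nonneg _)) (sq_nonneg t)
    _ = (∑ sh : Fin m → B, (∏ i, p i (sh i)) * (∑ i, c i (sh i))^2) / t^2 := by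
        rw [Finset.sum_div]
    _ = (∑ i, ∑ b, p i b * (c i b)^2) / t^2 := by rw [hmoment]
    _ = (∑ i, ∑ b, p i b * (h i b - ∑ c, p i c * h i c)^2) / t^2 := by rw [hc]

end Aux

section KT
variable {X : Type*} [Fintype X] {K k m : ℕ}

lemma kType_nonneg (x : Fin (m * (K + k)) → X) (a : Fin K → X) : 0 ≤ kType x a := by
  unfold kType empDist; positivity

lemma sum_blocks (hm : 0 < m) (x : Fin (m * (K + k)) → X) (f : (Fin K → X) → ℝ) :
    ∑ a, kType x a * f a = (∑ i, f (blockOf x i)) / m := by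
  have h1 : ∑ i : Fin m, f (blockOf x i)
      = ∑ a, ∑ i ∈ Finset.univ.filter (fun i : Fin m => blockOf x i = a), f a :=
    (Finset.sum_fiberwise' Finset.univ (fun i => blockOf x i) f).symm
  have h2 : ∀ a : Fin K → X,
      ∑ i ∈ Finset.univ.filter (fun i : Fin m => blockOf x i = a), f a
        = ((Finset.univ.filter (fun i : Fin m => blockOf x i = a)).card : ℝ) * f a := by
    intro a; rw [Finset.sum_const, nsmul_eq_mul]
  rw [h1, Finset.sum_congr rfl (fun a _ => h2 a), Finset.sum_div]
  refine Finset.sum_congr rfl (fun a _ => ?_)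
  unfold kType empDist
  rw [div_mul_eq_mul_div]
  congr!

lemma kType_sum_one (hm : 0 < m) (x : Fin (m * (K + k)) → X) :
    ∑ a, kType x a = 1 := by
  have := sum_blocks hm x (fun _ => 1)
  simp only [mul_one, Finset.sum_const, Finset.card_univ, Fintype.card_fin,
    nsmul_eq_mul] at this
  rw [this, div_self]
  exact ne_of_gt (by exact_mod_cast hm)

lemma kType_block_ge (hm : 0 < m) (x : Fin (m * (K + k)) → X) (i : Fin m) :
    1 / (m : ℝ) ≤ kType x (blockOf x i) := by
  unfold kType empDist
  have hm' : (0:ℝ) < m := by exact_mod_cast hm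
  gcongr
  exact_mod_cast Finset.card_pos.mpr ⟨i, by simp⟩

end KT

lemma mul_logb_sq_le {p : ℝ} (h0 : 0 < p) (h1 : p ≤ 1) : p * (Real.logb 2 p)^2 ≤ 9 := by
  have hlog2 : (0.6931471803 : ℝ) < Real.log 2 := Real.log_two_gt_d9
  have hinvpos : (0:ℝ) < p⁻¹ := by positivity
  have hinv : 1 ≤ p⁻¹ := one_le_inv_iff₀.mpr ⟨h0, h1⟩
  have hsq : 0 < Real.sqrt p⁻¹ := Real.sqrt_pos.mpr hinvpos
  have hls : Real.log (Real.sqrt p⁻¹) = Real.log p⁻¹ / 2 := Real.log_sqrt hinvpos.le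
  have h2 : Real.log p⁻¹ ≤ 2 * Real.sqrt p⁻¹ := by
    have := Real.log_le_sub_one_of_pos hsq
    rw [hls] at this
    nlinarith [hsq.le]
  have h3 : 0 ≤ Real.log p⁻¹ := Real.log_nonneg hinv
  have hs : (Real.sqrt p⁻¹)^2 = p⁻¹ := Real.sq_sqrt hinvpos.le
  have h4 : (Real.log p)^2 ≤ 4 * p⁻¹ := by
    have hsq2 : (Real.log p⁻¹)^2 ≤ (2*Real.sqrt p⁻¹)^2 := by nlinarith
    rw [Real.log_inv] at hsq2
    nlinarith
  have hpA : p * (Real.log p)^2 ≤ 4 := by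
    have := mul_le_mul_of_nonneg_left h4 h0.le
    rwa [mul_comm (4:ℝ) p⁻¹, ← mul_assoc, mul_inv_cancel₀ (ne_of_gt h0), one_mul] at this
  have hL2 : (0:ℝ) < (Real.log 2)^2 := by nlinarith
  have hB : (0.48 : ℝ) ≤ (Real.log 2)^2 := by nlinarith
  have hlb : (Real.logb 2 p)^2 = (Real.log p)^2 / (Real.log 2)^2 := by
    rw [Real.logb, div_pow]
  rw [hlb, mul_div_assoc', div_le_iff₀ hL2]
  nlinarith

set_option maxHeartbeats 3000000 in
/-- Block-memoryless lower bound. -/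
theorem block_memoryless_ball_lower_bound
    {X Xh : Type*} [Fintype X] [Fintype Xh] [Nonempty X] [Nonempty Xh]
    (d : X → Xh → ℝ) (hd : ∀ x xh, 0 ≤ d x xh) (D : ℝ)
    (hcover : ∀ x : X, ∃ xh : Xh, d x xh = 0)
    (K k : ℕ) (hK : 0 < K) (hk : 0 < k)
    (δ : ℝ) (hδ : 0 < δ)
    (hD' : 0 < D - (k : ℝ) * ((⨆ p : X × Xh, d p.1 p.2) - D) / K - δ / K)
    (ε : ℝ) (hε : 0 < ε) :
    ∃ εseq : ℕ → ℝ, Tendsto εseq atTop (nhds 0) ∧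
      ∀ (m : ℕ), 0 < m → ∀ (x : Fin (m * (K + k)) → X)
        (Pstar : (Fin K → X) → (Fin K → Xh) → ℝ),
        IsCondPMF Pstar →
        (∑ a, ∑ b, kType x a * Pstar a b * dSeq d a b) ≤
          (K : ℝ) * (D - (k : ℝ) * ((⨆ p : X × Xh, d p.1 p.2) - D) / K - δ / K) →
        mutInf2 (kType x) Pstar =
          RD (dSeq d) ((K : ℝ) * (D - (k : ℝ) * ((⨆ p : X × Xh, d p.1 p.2) - D) / K - δ / K))
            (kType x) →
        (1 - 2 * εseq m) *
            (2 : ℝ) ^ (-(m : ℝ) *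
              (RD (dSeq d)
                  ((K : ℝ) * (D - (k : ℝ) * ((⨆ p : X × Xh, d p.1 p.2) - D) / K - δ / K))
                  (kType x) + ε)) ≤
          ∑ sh ∈ Finset.univ.filter (fun sh : Fin m → (Fin K → Xh) =>
              (∑ i, dSeq d (blockOf x i) (sh i)) ≤
                (m : ℝ) * ((K : ℝ) * (D - (k : ℝ) * ((⨆ p : X × Xh, d p.1 p.2) - D) / K))),
            ∏ i, (∑ a, kType x a * Pstar a (sh i)) := by
  have hDmaxnn : 0 ≤ (⨆ p : X × Xh, d p.1 p.2) := by
    obtain ⟨x0⟩ := ‹Nonempty X›; obtain ⟨y0⟩ := ‹Nonempty Xh›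
    exact le_trans (hd x0 y0)
      (le_ciSup (f := fun p : X × Xh => d p.1 p.2) (Set.Finite.bddAbove (Set.finite_range _)) (x0, y0))
  have hdle : ∀ (a : X) (b : Xh), d a b ≤ (⨆ p : X × Xh, d p.1 p.2) := fun a b =>
    le_ciSup (f := fun p : X × Xh => d p.1 p.2) (Set.Finite.bddAbove (Set.finite_range _)) (a, b)
  set Dmax : ℝ := ⨆ p : X × Xh, d p.1 p.2 with hDmaxdef
  set cB : ℝ := (Fintype.card (Fin K → Xh) : ℝ) with hcBdef
  refine ⟨fun m => ((K*Dmax)^2/δ^2 + 9*cB/ε^2) * (m:ℝ)⁻¹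
      + (ε^2)⁻¹ * ((Real.logb 2 m)^2 * (m:ℝ)⁻¹), ?_, ?_⟩
  · -- Tendsto
    have h1 : Tendsto (fun m : ℕ => (m:ℝ)⁻¹) atTop (nhds 0) :=
      tendsto_inv_atTop_zero.comp tendsto_natCast_atTop_atTop
    have hlogsq : Tendsto (fun m : ℕ => (Real.logb 2 m)^2 * (m:ℝ)⁻¹) atTop (nhds 0) := by
      have h0 : Tendsto (fun x : ℝ => Real.log x ^ 2 / (1 * x + 0)) atTop (nhds 0) :=
        Real.tendsto_pow_log_div_mul_add_atTop 1 0 2 one_ne_zero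
      have h0' : Tendsto (fun x : ℝ => (Real.log x)^2 / x) atTop (nhds 0) := by
        simpa using h0
      have h2 : Tendsto (fun x : ℝ => (Real.log x)^2 / x * ((Real.log 2)^2)⁻¹) atTop (nhds 0) := by
        simpa using h0'.mul_const ((Real.log 2)^2)⁻¹
      have h3 := h2.comp tendsto_natCast_atTop_atTop
      refine h3.congr (fun m => ?_)
      show (Real.log (m:ℝ))^2 / (m:ℝ) * ((Real.log 2)^2)⁻¹
          = (Real.logb 2 (m:ℝ))^2 * ((m:ℝ))⁻¹
      rw [Real.logb, div_pow]
      ring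
    have htot := (h1.const_mul ((K*Dmax)^2/δ^2 + 9*cB/ε^2)).add
      (hlogsq.const_mul ((ε^2)⁻¹))
    simpa using htot
  · intro m hm x Pstar hPstar hdist hRopt
    have hm' : (0:ℝ) < m := by exact_mod_cast hm
    have hm1 : (1:ℝ) ≤ m := by exact_mod_cast hm
    have hK' : (0:ℝ) < K := by exact_mod_cast hK
    set R := RD (dSeq d) ((K : ℝ) * (D - (k : ℝ) * (Dmax - D) / K - δ / K)) (kType x) with hRdef
    set Q : (Fin K → Xh) → ℝ := fun b => ∑ a, kType x a * Pstar a b with hQdef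
    set ballT := (m:ℝ) * ((K:ℝ) * (D - (k:ℝ) * (Dmax - D) / K)) with hballTdef
    have hp0 : ∀ (i : Fin m) (b : Fin K → Xh), 0 ≤ Pstar (blockOf x i) b :=
      fun i b => (hPstar (blockOf x i)).1 b
    have hp1 : ∀ i : Fin m, ∑ b, Pstar (blockOf x i) b = 1 :=
      fun i => (hPstar (blockOf x i)).2
    have hPle1 : ∀ (a : Fin K → X) (b : Fin K → Xh), Pstar a b ≤ 1 := by
      intro a b
      have := Finset.single_le_sum (f := fun c => Pstar a c)
        (fun c _ => (hPstar a).1 c) (Finset.mem_univ b)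
      rwa [(hPstar a).2] at this
    have hQ0 : ∀ b, 0 ≤ Q b := fun b =>
      Finset.sum_nonneg (fun a _ => mul_nonneg (kType_nonneg x a) ((hPstar a).1 b))
    have hQ1 : ∀ b, Q b ≤ 1 := by
      intro b
      calc Q b ≤ ∑ a, kType x a :=
            Finset.sum_le_sum (fun a _ =>
              mul_le_of_le_one_right (kType_nonneg x a) (hPle1 a b))
        _ = 1 := kType_sum_one hm x
    have hQle : ∀ (i : Fin m) (b : Fin K → Xh), Pstar (blockOf x i) b * (1/(m:ℝ)) ≤ Q b := by
      intro i b
      have h1 : kType x (blockOf x i) * Pstar (blockOf x i) b ≤ Q b :=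
        Finset.single_le_sum (f := fun a => kType x a * Pstar a b)
          (fun a _ => mul_nonneg (kType_nonneg x a) ((hPstar a).1 b))
          (Finset.mem_univ (blockOf x i))
      have h2 := kType_block_ge hm x i
      nlinarith [hp0 i b]
    have hf0 : ∀ (i : Fin m) (b : Fin K → Xh), 0 ≤ dSeq d (blockOf x i) b :=
      fun i b => Finset.sum_nonneg fun j _ => hd _ _
    have hfle : ∀ (i : Fin m) (b : Fin K → Xh), dSeq d (blockOf x i) b ≤ K * Dmax := by
      intro i b
      calc dSeq d (blockOf x i) b ≤ ∑ _j : Fin K, Dmax :=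
            Finset.sum_le_sum (fun j _ => hdle _ _)
        _ = K * Dmax := by
            rw [Finset.sum_const, Finset.card_univ, Fintype.card_fin, nsmul_eq_mul]
    have hEf : ∑ i : Fin m, ∑ b, Pstar (blockOf x i) b * dSeq d (blockOf x i) b
        ≤ (m:ℝ) * ((K:ℝ) * (D - (k:ℝ) * (Dmax - D) / K - δ / K)) := by
      have hcount := sum_blocks hm x (fun a => ∑ b, Pstar a b * dSeq d a b)
      have hl : ∑ a, kType x a * (∑ b, Pstar a b * dSeq d a b)
          = ∑ a, ∑ b, kType x a * Pstar a b * dSeq d a b := by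
        refine Finset.sum_congr rfl (fun a _ => ?_)
        rw [Finset.mul_sum]
        exact Finset.sum_congr rfl (fun b _ => by ring)
      have heq : ∑ i : Fin m, ∑ b, Pstar (blockOf x i) b * dSeq d (blockOf x i) b
          = (m:ℝ) * ∑ a, ∑ b, kType x a * Pstar a b * dSeq d a b := by
        rw [← hl, hcount]
        field_simp
      rw [heq]
      exact mul_le_mul_of_nonneg_left hdist hm'.le
    have hEg : ∑ i : Fin m, ∑ b, Pstar (blockOf x i) b
          * Real.logb 2 (Pstar (blockOf x i) b / Q b) = (m:ℝ) * R := by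
      have hcount := sum_blocks hm x
        (fun a => ∑ b, Pstar a b * Real.logb 2 (Pstar a b / Q b))
      have hM : mutInf2 (kType x) Pstar
          = ∑ a, kType x a * (∑ b, Pstar a b * Real.logb 2 (Pstar a b / Q b)) := by
        unfold mutInf2
        refine Finset.sum_congr rfl (fun a _ => ?_)
        rw [Finset.mul_sum]
        refine Finset.sum_congr rfl (fun b _ => ?_)
        simp only [hQdef]
        ring
      have hmr : (∑ i : Fin m, ∑ b, Pstar (blockOf x i) b
            * Real.logb 2 (Pstar (blockOf x i) b / Q b))
          = (m:ℝ) * (mutInf2 (kType x) Pstar) := by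
        rw [hM, hcount]
        field_simp
      rw [hmr, hRopt]
    have hvar1 : (∑ i : Fin m, ∑ b, Pstar (blockOf x i) b
          * (dSeq d (blockOf x i) b - ∑ c, Pstar (blockOf x i) c * dSeq d (blockOf x i) c)^2)
        ≤ (m:ℝ) * ((K*Dmax)^2) := by
      have hterm : ∀ i : Fin m, (∑ b, Pstar (blockOf x i) b
          * (dSeq d (blockOf x i) b - ∑ c, Pstar (blockOf x i) c * dSeq d (blockOf x i) c)^2)
          ≤ (K*Dmax)^2 := by
        intro i
        have hmean0 : 0 ≤ ∑ c, Pstar (blockOf x i) c * dSeq d (blockOf x i) c :=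
          Finset.sum_nonneg (fun c _ => mul_nonneg (hp0 i c) (hf0 i c))
        have hmeanle : ∑ c, Pstar (blockOf x i) c * dSeq d (blockOf x i) c ≤ K*Dmax := by
          calc ∑ c, Pstar (blockOf x i) c * dSeq d (blockOf x i) c
              ≤ ∑ c, Pstar (blockOf x i) c * (K*Dmax) :=
                Finset.sum_le_sum (fun c _ =>
                  mul_le_mul_of_nonneg_left (hfle i c) (hp0 i c))
            _ = K*Dmax := by rw [← Finset.sum_mul, hp1 i, one_mul]
        calc (∑ b, Pstar (blockOf x i) b
              * (dSeq d (blockOf x i) b - ∑ c, Pstar (blockOf x i) c * dSeq d (blockOf x i) c)^2)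
            ≤ ∑ b, Pstar (blockOf x i) b * (K*Dmax)^2 := by
              refine Finset.sum_le_sum (fun b _ => ?_)
              refine mul_le_mul_of_nonneg_left ?_ (hp0 i b)
              have h1 := hf0 i b
              have h2 := hfle i b
              nlinarith
          _ = (K*Dmax)^2 := by rw [← Finset.sum_mul, hp1 i, one_mul]
      calc (∑ i : Fin m, ∑ b, Pstar (blockOf x i) b
            * (dSeq d (blockOf x i) b - ∑ c, Pstar (blockOf x i) c * dSeq d (blockOf x i) c)^2)
          ≤ ∑ _i : Fin m, (K*Dmax)^2 := Finset.sum_le_sum (fun i _ => hterm i)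
        _ = (m:ℝ) * ((K*Dmax)^2) := by
            rw [Finset.sum_const, Finset.card_univ, Fintype.card_fin, nsmul_eq_mul]
    have hcheb1 := chebyshev_tail (fun i : Fin m => fun b => Pstar (blockOf x i) b)
      hp0 hp1 (fun i b => dSeq d (blockOf x i) b) ((m:ℝ)*δ) (by positivity)
    have he1 : ∑ sh ∈ Finset.univ.filter (fun sh : Fin m → (Fin K → Xh) =>
          ballT < ∑ i, dSeq d (blockOf x i) (sh i)),
        ∏ i, Pstar (blockOf x i) (sh i) ≤ (K*Dmax)^2/δ^2 * (m:ℝ)⁻¹ := by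
      have hsub : Finset.univ.filter (fun sh : Fin m → (Fin K → Xh) =>
            ballT < ∑ i, dSeq d (blockOf x i) (sh i))
          ⊆ Finset.univ.filter (fun sh : Fin m → (Fin K → Xh) =>
            (∑ i : Fin m, ∑ b, Pstar (blockOf x i) b * dSeq d (blockOf x i) b) + (m:ℝ)*δ
              < ∑ i, dSeq d (blockOf x i) (sh i)) := by
        intro sh hsh
        rw [Finset.mem_filter] at hsh ⊢
        refine ⟨hsh.1, ?_⟩
        have hKD : (m:ℝ) * ((K:ℝ) * (D - (k:ℝ) * (Dmax - D) / K - δ / K))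
            = ballT - (m:ℝ)*δ := by
          rw [hballTdef]
          field_simp
        have hEf' := hEf
        rw [hKD] at hEf'
        linarith [hsh.2]
      calc ∑ sh ∈ Finset.univ.filter (fun sh : Fin m → (Fin K → Xh) =>
            ballT < ∑ i, dSeq d (blockOf x i) (sh i)),
          ∏ i, Pstar (blockOf x i) (sh i)
          ≤ ∑ sh ∈ Finset.univ.filter (fun sh : Fin m → (Fin K → Xh) =>
            (∑ i : Fin m, ∑ b, Pstar (blockOf x i) b * dSeq d (blockOf x i) b) + (m:ℝ)*δ
              < ∑ i, dSeq d (blockOf x i) (sh i)),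
          ∏ i, Pstar (blockOf x i) (sh i) := by
            refine Finset.sum_le_sum_of_subset_of_nonneg hsub (fun sh _ _ => ?_)
            exact Finset.prod_nonneg (fun i _ => hp0 i (sh i))
        _ ≤ (∑ i : Fin m, ∑ b, Pstar (blockOf x i) b
              * (dSeq d (blockOf x i) b
                - ∑ c, Pstar (blockOf x i) c * dSeq d (blockOf x i) c)^2) / ((m:ℝ)*δ)^2 :=
            hcheb1
        _ ≤ ((m:ℝ) * ((K*Dmax)^2)) / ((m:ℝ)*δ)^2 := by
            gcongr
        _ = (K*Dmax)^2/δ^2 * (m:ℝ)⁻¹ := by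
            field_simp
    have hvar2 : (∑ i : Fin m, ∑ b, Pstar (blockOf x i) b
          * (Real.logb 2 (Pstar (blockOf x i) b / Q b)
            - ∑ c, Pstar (blockOf x i) c * Real.logb 2 (Pstar (blockOf x i) c / Q c))^2)
        ≤ (m:ℝ) * ((Real.logb 2 m)^2 + 9*cB) := by
      have hterm : ∀ i : Fin m, (∑ b, Pstar (blockOf x i) b
            * (Real.logb 2 (Pstar (blockOf x i) b / Q b)
              - ∑ c, Pstar (blockOf x i) c * Real.logb 2 (Pstar (blockOf x i) c / Q c))^2)
          ≤ (Real.logb 2 m)^2 + 9*cB := by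
        intro i
        set ν := ∑ c, Pstar (blockOf x i) c * Real.logb 2 (Pstar (blockOf x i) c / Q c) with hν
        have hid : (∑ b, Pstar (blockOf x i) b
              * (Real.logb 2 (Pstar (blockOf x i) b / Q b) - ν)^2)
            = (∑ b, Pstar (blockOf x i) b * (Real.logb 2 (Pstar (blockOf x i) b / Q b))^2)
              - ν^2 := by
          have hterm2 : ∀ b, Pstar (blockOf x i) b
                * (Real.logb 2 (Pstar (blockOf x i) b / Q b) - ν)^2
              = Pstar (blockOf x i) b * (Real.logb 2 (Pstar (blockOf x i) b / Q b))^2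
                - 2*ν*(Pstar (blockOf x i) b * Real.logb 2 (Pstar (blockOf x i) b / Q b))
                + ν^2 * Pstar (blockOf x i) b := by
            intro b; ring
          rw [Finset.sum_congr rfl (fun b _ => hterm2 b), Finset.sum_add_distrib,
            Finset.sum_sub_distrib, ← Finset.mul_sum, ← Finset.mul_sum, ← hν, hp1 i]
          ring
        have hsecond : (∑ b, Pstar (blockOf x i) b
              * (Real.logb 2 (Pstar (blockOf x i) b / Q b))^2)
            ≤ (Real.logb 2 m)^2 + 9*cB := by
          have htb : ∀ b, Pstar (blockOf x i) b
                * (Real.logb 2 (Pstar (blockOf x i) b / Q b))^2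
              ≤ Pstar (blockOf x i) b * (Real.logb 2 m)^2 + 9 := by
            intro b
            rcases eq_or_lt_of_le (hp0 i b) with hpb | hpb
            · rw [← hpb]
              have hln : (0:ℝ) ≤ (Real.logb 2 m)^2 := sq_nonneg _
              norm_num
            · have hQb : 0 < Q b := lt_of_lt_of_le (by positivity) (hQle i b)
              have hrat_pos : 0 < Pstar (blockOf x i) b / Q b := div_pos hpb hQb
              have hrat_le : Pstar (blockOf x i) b / Q b ≤ (m:ℝ) := by
                rw [div_le_iff₀ hQb]
                have hQle' := hQle i b
                calc Pstar (blockOf x i) b = (Pstar (blockOf x i) b * (1/(m:ℝ))) * m := by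
                      field_simp
                  _ ≤ Q b * m := mul_le_mul_of_nonneg_right hQle' hm'.le
                  _ = (m:ℝ) * Q b := by ring
              have hrat_ge : Pstar (blockOf x i) b ≤ Pstar (blockOf x i) b / Q b := by
                rw [le_div_iff₀ hQb]
                exact mul_le_of_le_one_right hpb.le (hQ1 b)
              have hg_hi : Real.logb 2 (Pstar (blockOf x i) b / Q b) ≤ Real.logb 2 m :=
                Real.logb_le_logb_of_le one_lt_two hrat_pos hrat_le
              have hg_lo : Real.logb 2 (Pstar (blockOf x i) b)
                  ≤ Real.logb 2 (Pstar (blockOf x i) b / Q b) :=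
                Real.logb_le_logb_of_le one_lt_two hpb hrat_ge
              have hlogp_np : Real.logb 2 (Pstar (blockOf x i) b) ≤ 0 :=
                Real.logb_nonpos one_lt_two (hp0 i b) (hPle1 _ _)
              have hlogm_nn : 0 ≤ Real.logb 2 (m:ℝ) := Real.logb_nonneg one_lt_two hm1
              have hsq : (Real.logb 2 (Pstar (blockOf x i) b / Q b))^2
                  ≤ (Real.logb 2 (m:ℝ))^2 + (Real.logb 2 (Pstar (blockOf x i) b))^2 := by
                rcases le_or_gt 0 (Real.logb 2 (Pstar (blockOf x i) b / Q b)) with hg0 | hg0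
                · have hsq1 := pow_le_pow_left₀ hg0 hg_hi 2
                  nlinarith [sq_nonneg (Real.logb 2 (Pstar (blockOf x i) b))]
                · have hsq1 := pow_le_pow_left₀ (by linarith : (0:ℝ) ≤ -(Real.logb 2 (Pstar (blockOf x i) b / Q b))) (by linarith : -(Real.logb 2 (Pstar (blockOf x i) b / Q b)) ≤ -(Real.logb 2 (Pstar (blockOf x i) b))) 2
                  nlinarith [sq_nonneg (Real.logb 2 (m:ℝ))]
              have h9 := mul_logb_sq_le hpb (hPle1 (blockOf x i) b)
              nlinarith [hpb.le]
          calc (∑ b, Pstar (blockOf x i) b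
                * (Real.logb 2 (Pstar (blockOf x i) b / Q b))^2)
              ≤ ∑ b, (Pstar (blockOf x i) b * (Real.logb 2 m)^2 + 9) :=
                Finset.sum_le_sum (fun b _ => htb b)
            _ = (Real.logb 2 m)^2 + 9*cB := by
                rw [Finset.sum_add_distrib, ← Finset.sum_mul, hp1 i, one_mul,
                  Finset.sum_const, Finset.card_univ, nsmul_eq_mul, hcBdef]
                ring
        have hν2 : 0 ≤ ν^2 := sq_nonneg ν
        rw [hid]
        linarith
      calc (∑ i : Fin m, ∑ b, Pstar (blockOf x i) b
            * (Real.logb 2 (Pstar (blockOf x i) b / Q b)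
              - ∑ c, Pstar (blockOf x i) c * Real.logb 2 (Pstar (blockOf x i) c / Q c))^2)
          ≤ ∑ _i : Fin m, ((Real.logb 2 m)^2 + 9*cB) := Finset.sum_le_sum (fun i _ => hterm i)
        _ = (m:ℝ) * ((Real.logb 2 m)^2 + 9*cB) := by
            rw [Finset.sum_const, Finset.card_univ, Fintype.card_fin, nsmul_eq_mul]
    have hcheb2 := chebyshev_tail (fun i : Fin m => fun b => Pstar (blockOf x i) b)
      hp0 hp1 (fun i b => Real.logb 2 (Pstar (blockOf x i) b / Q b)) ((m:ℝ)*ε) (by positivity)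
    have he2 : ∑ sh ∈ Finset.univ.filter (fun sh : Fin m → (Fin K → Xh) =>
          (m:ℝ)*(R+ε) < ∑ i, Real.logb 2 (Pstar (blockOf x i) (sh i) / Q (sh i))),
        ∏ i, Pstar (blockOf x i) (sh i)
        ≤ ((Real.logb 2 m)^2 + 9*cB)/ε^2 * (m:ℝ)⁻¹ := by
      have hsub : Finset.univ.filter (fun sh : Fin m → (Fin K → Xh) =>
            (m:ℝ)*(R+ε) < ∑ i, Real.logb 2 (Pstar (blockOf x i) (sh i) / Q (sh i)))
          ⊆ Finset.univ.filter (fun sh : Fin m → (Fin K → Xh) =>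
            (∑ i : Fin m, ∑ b, Pstar (blockOf x i) b
              * Real.logb 2 (Pstar (blockOf x i) b / Q b)) + (m:ℝ)*ε
              < ∑ i, Real.logb 2 (Pstar (blockOf x i) (sh i) / Q (sh i))) := by
        intro sh hsh
        rw [Finset.mem_filter] at hsh ⊢
        refine ⟨hsh.1, ?_⟩
        rw [hEg]
        have := hsh.2
        nlinarith
      calc ∑ sh ∈ Finset.univ.filter (fun sh : Fin m → (Fin K → Xh) =>
            (m:ℝ)*(R+ε) < ∑ i, Real.logb 2 (Pstar (blockOf x i) (sh i) / Q (sh i))),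
          ∏ i, Pstar (blockOf x i) (sh i)
          ≤ ∑ sh ∈ Finset.univ.filter (fun sh : Fin m → (Fin K → Xh) =>
            (∑ i : Fin m, ∑ b, Pstar (blockOf x i) b
              * Real.logb 2 (Pstar (blockOf x i) b / Q b)) + (m:ℝ)*ε
              < ∑ i, Real.logb 2 (Pstar (blockOf x i) (sh i) / Q (sh i))),
          ∏ i, Pstar (blockOf x i) (sh i) := by
            refine Finset.sum_le_sum_of_subset_of_nonneg hsub (fun sh _ _ => ?_)
            exact Finset.prod_nonneg (fun i _ => hp0 i (sh i))
        _ ≤ (∑ i : Fin m, ∑ b, Pstar (blockOf x i) b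
              * (Real.logb 2 (Pstar (blockOf x i) b / Q b)
                - ∑ c, Pstar (blockOf x i) c
                  * Real.logb 2 (Pstar (blockOf x i) c / Q c))^2) / ((m:ℝ)*ε)^2 :=
            hcheb2
        _ ≤ ((m:ℝ) * ((Real.logb 2 m)^2 + 9*cB)) / ((m:ℝ)*ε)^2 := by
            gcongr
        _ = ((Real.logb 2 m)^2 + 9*cB)/ε^2 * (m:ℝ)⁻¹ := by
            field_simp
    -- mass of the good set
    have hmass : 1 - ((K*Dmax)^2/δ^2 * (m:ℝ)⁻¹ + ((Real.logb 2 m)^2 + 9*cB)/ε^2 * (m:ℝ)⁻¹)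
        ≤ ∑ sh ∈ Finset.univ.filter (fun sh : Fin m → (Fin K → Xh) =>
            (∑ i, dSeq d (blockOf x i) (sh i)) ≤ ballT ∧
            (∑ i, Real.logb 2 (Pstar (blockOf x i) (sh i) / Q (sh i))) ≤ (m:ℝ)*(R+ε)),
          ∏ i, Pstar (blockOf x i) (sh i) := by
      have htotal : ∑ sh : Fin m → (Fin K → Xh), ∏ i, Pstar (blockOf x i) (sh i) = 1 :=
        prod_mass_one (fun i b => Pstar (blockOf x i) b) hp1
      have hsplit := Finset.sum_filter_add_sum_filter_not Finset.univ
        (fun sh : Fin m → (Fin K → Xh) =>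
          (∑ i, dSeq d (blockOf x i) (sh i)) ≤ ballT ∧
          (∑ i, Real.logb 2 (Pstar (blockOf x i) (sh i) / Q (sh i))) ≤ (m:ℝ)*(R+ε))
        (fun sh => ∏ i, Pstar (blockOf x i) (sh i))
      have hbad : ∑ sh ∈ Finset.univ.filter (fun sh : Fin m → (Fin K → Xh) =>
          ¬((∑ i, dSeq d (blockOf x i) (sh i)) ≤ ballT ∧
            (∑ i, Real.logb 2 (Pstar (blockOf x i) (sh i) / Q (sh i))) ≤ (m:ℝ)*(R+ε))),
          ∏ i, Pstar (blockOf x i) (sh i)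
          ≤ (K*Dmax)^2/δ^2 * (m:ℝ)⁻¹ + ((Real.logb 2 m)^2 + 9*cB)/ε^2 * (m:ℝ)⁻¹ := by
        have hsub2 : Finset.univ.filter (fun sh : Fin m → (Fin K → Xh) =>
            ¬((∑ i, dSeq d (blockOf x i) (sh i)) ≤ ballT ∧
              (∑ i, Real.logb 2 (Pstar (blockOf x i) (sh i) / Q (sh i))) ≤ (m:ℝ)*(R+ε)))
            ⊆ (Finset.univ.filter (fun sh : Fin m → (Fin K → Xh) =>
                ballT < ∑ i, dSeq d (blockOf x i) (sh i)))
              ∪ (Finset.univ.filter (fun sh : Fin m → (Fin K → Xh) =>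
                (m:ℝ)*(R+ε) < ∑ i, Real.logb 2 (Pstar (blockOf x i) (sh i) / Q (sh i)))) := by
          intro sh hsh
          rw [Finset.mem_filter, not_and_or, not_le, not_le] at hsh
          rw [Finset.mem_union, Finset.mem_filter, Finset.mem_filter]
          rcases hsh.2 with hA | hB
          · exact Or.inl ⟨Finset.mem_univ _, hA⟩
          · exact Or.inr ⟨Finset.mem_univ _, hB⟩
        have hstep1 : ∑ sh ∈ Finset.univ.filter (fun sh : Fin m → (Fin K → Xh) =>
            ¬((∑ i, dSeq d (blockOf x i) (sh i)) ≤ ballT ∧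
              (∑ i, Real.logb 2 (Pstar (blockOf x i) (sh i) / Q (sh i))) ≤ (m:ℝ)*(R+ε))),
            ∏ i, Pstar (blockOf x i) (sh i)
            ≤ ∑ sh ∈ (Finset.univ.filter (fun sh : Fin m → (Fin K → Xh) =>
                ballT < ∑ i, dSeq d (blockOf x i) (sh i)))
              ∪ (Finset.univ.filter (fun sh : Fin m → (Fin K → Xh) =>
                (m:ℝ)*(R+ε) < ∑ i, Real.logb 2 (Pstar (blockOf x i) (sh i) / Q (sh i)))),
            ∏ i, Pstar (blockOf x i) (sh i) := by
          refine Finset.sum_le_sum_of_subset_of_nonneg hsub2 (fun sh _ _ => ?_)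
          exact Finset.prod_nonneg (fun i _ => hp0 i (sh i))
        have hstep2 := Finset.sum_union_inter
          (s₁ := Finset.univ.filter (fun sh : Fin m → (Fin K → Xh) =>
              ballT < ∑ i, dSeq d (blockOf x i) (sh i)))
          (s₂ := Finset.univ.filter (fun sh : Fin m → (Fin K → Xh) =>
              (m:ℝ)*(R+ε) < ∑ i, Real.logb 2 (Pstar (blockOf x i) (sh i) / Q (sh i))))
          (f := fun sh => ∏ i, Pstar (blockOf x i) (sh i))
        have hinter : 0 ≤ ∑ sh ∈ (Finset.univ.filter (fun sh : Fin m → (Fin K → Xh) =>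
              ballT < ∑ i, dSeq d (blockOf x i) (sh i)))
            ∩ (Finset.univ.filter (fun sh : Fin m → (Fin K → Xh) =>
              (m:ℝ)*(R+ε) < ∑ i, Real.logb 2 (Pstar (blockOf x i) (sh i) / Q (sh i)))),
            ∏ i, Pstar (blockOf x i) (sh i) :=
          Finset.sum_nonneg (fun sh _ => Finset.prod_nonneg (fun i _ => hp0 i (sh i)))
        linarith [he1, he2]
      linarith [hsplit, htotal, hbad]
    -- pointwise change of measure on the good set
    have h2pos : (0:ℝ) < (2:ℝ) ^ (-(m:ℝ) * (R + ε)) := Real.rpow_pos_of_pos two_pos _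
    have hpoint : ∀ sh ∈ Finset.univ.filter (fun sh : Fin m → (Fin K → Xh) =>
            (∑ i, dSeq d (blockOf x i) (sh i)) ≤ ballT ∧
            (∑ i, Real.logb 2 (Pstar (blockOf x i) (sh i) / Q (sh i))) ≤ (m:ℝ)*(R+ε)),
        (∏ i, Pstar (blockOf x i) (sh i)) * (2:ℝ) ^ (-(m:ℝ) * (R + ε))
          ≤ ∏ i, Q (sh i) := by
      intro sh hsh
      rw [Finset.mem_filter] at hsh
      by_cases hzero : ∃ i, Pstar (blockOf x i) (sh i) = 0
      · obtain ⟨i0, hi0⟩ := hzero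
        rw [Finset.prod_eq_zero (Finset.mem_univ i0) hi0, zero_mul]
        exact Finset.prod_nonneg (fun i _ => hQ0 _)
      · push_neg at hzero
        have hppos : ∀ i : Fin m, 0 < Pstar (blockOf x i) (sh i) :=
          fun i => lt_of_le_of_ne (hp0 i (sh i)) (Ne.symm (hzero i))
        have hQpos : ∀ i : Fin m, 0 < Q (sh i) :=
          fun i => lt_of_lt_of_le (mul_pos (hppos i) (by positivity)) (hQle i (sh i))
        have hQeq : ∀ i : Fin m, Q (sh i) = Pstar (blockOf x i) (sh i)
            * (2:ℝ) ^ (-(Real.logb 2 (Pstar (blockOf x i) (sh i) / Q (sh i)))) := by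
          intro i
          rw [Real.rpow_neg (by norm_num : (0:ℝ) ≤ 2),
            Real.rpow_logb (by norm_num) (by norm_num) (div_pos (hppos i) (hQpos i))]
          field_simp
          exact (mul_div_cancel_right₀ _ (ne_of_gt (hppos i))).symm
        calc (∏ i, Pstar (blockOf x i) (sh i)) * (2:ℝ) ^ (-(m:ℝ) * (R + ε))
            ≤ (∏ i, Pstar (blockOf x i) (sh i))
              * (2:ℝ) ^ (-(∑ i, Real.logb 2 (Pstar (blockOf x i) (sh i) / Q (sh i)))) := by
              refine mul_le_mul_of_nonneg_left ?_
                (Finset.prod_nonneg (fun i _ => hp0 i (sh i)))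
              refine Real.rpow_le_rpow_of_exponent_le one_le_two ?_
              have := hsh.2.2
              nlinarith
          _ = ∏ i, Q (sh i) := by
              have hqq : ∏ i, Q (sh i) = (∏ i, Pstar (blockOf x i) (sh i))
                  * ∏ i, (2:ℝ) ^ (-(Real.logb 2 (Pstar (blockOf x i) (sh i) / Q (sh i)))) := by
                rw [← Finset.prod_mul_distrib]
                exact Finset.prod_congr rfl (fun i _ => hQeq i)
              rw [hqq]
              congr 1
              rw [← Real.rpow_sum_of_pos (by norm_num : (0:ℝ) < 2)
                (fun i => -(Real.logb 2 (Pstar (blockOf x i) (sh i) / Q (sh i)))) Finset.univ]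
              congr 1
              rw [Finset.sum_neg_distrib]
    -- final chain
    have hee : (K*Dmax)^2/δ^2 * (m:ℝ)⁻¹ + ((Real.logb 2 m)^2 + 9*cB)/ε^2 * (m:ℝ)⁻¹
        = ((K*Dmax)^2/δ^2 + 9*cB/ε^2) * (m:ℝ)⁻¹
          + (ε^2)⁻¹ * ((Real.logb 2 m)^2 * (m:ℝ)⁻¹) := by
      field_simp
      ring
    have hεnn : (0:ℝ) ≤ ((K*Dmax)^2/δ^2 + 9*cB/ε^2) * (m:ℝ)⁻¹
        + (ε^2)⁻¹ * ((Real.logb 2 m)^2 * (m:ℝ)⁻¹) := by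
      have hcB0 : (0:ℝ) ≤ cB := by rw [hcBdef]; positivity
      have h1 : (0:ℝ) ≤ ((K*Dmax)^2/δ^2 + 9*cB/ε^2) := by positivity
      have h2 : (0:ℝ) ≤ (ε^2)⁻¹ * ((Real.logb 2 m)^2 * (m:ℝ)⁻¹) := by positivity
      have h3 : (0:ℝ) ≤ ((m:ℝ))⁻¹ := by positivity
      nlinarith
    calc (1 - 2 * (((K*Dmax)^2/δ^2 + 9*cB/ε^2) * (m:ℝ)⁻¹
            + (ε^2)⁻¹ * ((Real.logb 2 m)^2 * (m:ℝ)⁻¹))) * (2:ℝ) ^ (-(m:ℝ) * (R + ε))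
        ≤ (1 - ((K*Dmax)^2/δ^2 * (m:ℝ)⁻¹ + ((Real.logb 2 m)^2 + 9*cB)/ε^2 * (m:ℝ)⁻¹))
            * (2:ℝ) ^ (-(m:ℝ) * (R + ε)) := by
          refine mul_le_mul_of_nonneg_right ?_ h2pos.le
          rw [hee]
          linarith [hεnn]
      _ ≤ (∑ sh ∈ Finset.univ.filter (fun sh : Fin m → (Fin K → Xh) =>
            (∑ i, dSeq d (blockOf x i) (sh i)) ≤ ballT ∧
            (∑ i, Real.logb 2 (Pstar (blockOf x i) (sh i) / Q (sh i))) ≤ (m:ℝ)*(R+ε)),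
          ∏ i, Pstar (blockOf x i) (sh i)) * (2:ℝ) ^ (-(m:ℝ) * (R + ε)) :=
          mul_le_mul_of_nonneg_right hmass h2pos.le
      _ = ∑ sh ∈ Finset.univ.filter (fun sh : Fin m → (Fin K → Xh) =>
            (∑ i, dSeq d (blockOf x i) (sh i)) ≤ ballT ∧
            (∑ i, Real.logb 2 (Pstar (blockOf x i) (sh i) / Q (sh i))) ≤ (m:ℝ)*(R+ε)),
          (∏ i, Pstar (blockOf x i) (sh i)) * (2:ℝ) ^ (-(m:ℝ) * (R + ε)) := by
          rw [Finset.sum_mul]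
      _ ≤ ∑ sh ∈ Finset.univ.filter (fun sh : Fin m → (Fin K → Xh) =>
            (∑ i, dSeq d (blockOf x i) (sh i)) ≤ ballT ∧
            (∑ i, Real.logb 2 (Pstar (blockOf x i) (sh i) / Q (sh i))) ≤ (m:ℝ)*(R+ε)),
          ∏ i, Q (sh i) := Finset.sum_le_sum hpoint
      _ ≤ ∑ sh ∈ Finset.univ.filter (fun sh : Fin m → (Fin K → Xh) =>
            (∑ i, dSeq d (blockOf x i) (sh i)) ≤ ballT),
          ∏ i, Q (sh i) := by
          refine Finset.sum_le_sum_of_subset_of_nonneg ?_ (fun sh _ _ =>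
            Finset.prod_nonneg (fun i _ => hQ0 _))
          intro sh hsh
          rw [Finset.mem_filter] at hsh ⊢
          exact ⟨hsh.1, hsh.2.1⟩
      _ = ∑ sh ∈ Finset.univ.filter (fun sh : Fin m → (Fin K → Xh) =>
            (∑ i, dSeq d (blockOf x i) (sh i)) ≤ ballT),
          ∏ i, (∑ a, kType x a * Pstar a (sh i)) := by
          simp only [hQdef]
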